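/- Let t0 < t1, let a : ℝ × [t0,t1] → ℝ be continuous, let p : ℝ × [t0,t1] → ℝ be continuously differentiable, and suppose the map x ↦ a(x,t)·p(x,t) is continuously differentiable in x with jointly continuous derivative ∂/∂x (a p). Let r₋, r₊ : [t0,t1] → ℝ be continuously differentiable characteristic curves satisfying r₋'(t) = a(r₋(t),t) and r₊'(t) = a(r₊(t),t) with r₋(t) ≤ r₊(t) for all t. Then ∫_{t0}^{t1} ( ∫_{r₋(t)}^{r₊(t)} [ ∂p/∂t (x,t) + ∂/∂x ( a(x,t) p(x,t) ) ] dx ) dt = ∫_{r₋(t1)}^{r₊(t1)} p(x,t1) dx − ∫_{r₋(t0)}^{r₊(t0)} p(x,t0) dx. -/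

import Mathlib

open MeasureTheory intervalIntegral Set

set_option maxHeartbeats 1600000

/-- FTC on a subinterval of `Icc t0 t1` for a function differentiable within `Icc t0 t1`. -/
lemma aux_ftc_icc {t0 t1 : ℝ} {f f' : ℝ → ℝ}
    (hd : ∀ τ ∈ Icc t0 t1, HasDerivWithinAt f (f' τ) (Icc t0 t1) τ)
    (hint : ∀ u v : ℝ, IntervalIntegrable f' volume u v)
    {t s : ℝ} (htm : t ∈ Icc t0 t1) (hsm : s ∈ Icc t0 t1) :
    ∫ τ in t..s, f' τ = f s - f t := by
  have hsub : uIcc t s ⊆ Icc t0 t1 := uIcc_subset_Icc htm hsm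
  apply intervalIntegral.integral_eq_sub_of_hasDeriv_right
  · exact fun τ hτ => ((hd τ (hsub hτ)).continuousWithinAt).mono hsub
  · intro τ hτ
    have hτ' : τ ∈ Icc t0 t1 := hsub (Ioo_subset_Icc_self hτ)
    have hlt : τ < t1 := lt_of_lt_of_le hτ.2 (max_le htm.2 hsm.2)
    exact (hd τ hτ').mono_of_mem_nhdsWithin (Icc_mem_nhdsGT_of_mem ⟨hτ'.1, hlt⟩)
  · exact hint t s

/-- Differentiation under the interval integral (fixed bounds), within `Icc t0 t1`. -/
lemma aux_param {t0 t1 : ℝ} {P PT : ℝ → ℝ → ℝ}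
    (hP : Continuous fun z : ℝ × ℝ => P z.1 z.2)
    (hPT : Continuous fun z : ℝ × ℝ => PT z.1 z.2)
    (hd : ∀ x : ℝ, ∀ τ ∈ Icc t0 t1, HasDerivWithinAt (fun s => P x s) (PT x τ) (Icc t0 t1) τ)
    (α β : ℝ) {t : ℝ} (htm : t ∈ Icc t0 t1) :
    HasDerivWithinAt (fun s => ∫ x in α..β, P x s) (∫ x in α..β, PT x t) (Icc t0 t1) t := by
  have hPcx : ∀ u : ℝ, Continuous fun x => P x u := fun u =>
    hP.comp (continuous_id.prodMk continuous_const)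
  have hPTcx : ∀ u : ℝ, Continuous fun x => PT x u := fun u =>
    hPT.comp (continuous_id.prodMk continuous_const)
  have hPTct : ∀ x : ℝ, Continuous fun u => PT x u := fun x =>
    hPT.comp (continuous_const.prodMk continuous_id)
  rw [hasDerivWithinAt_iff_isLittleO, Asymptotics.isLittleO_iff]
  intro ε hε
  have hB : (0:ℝ) ≤ |β - α| := abs_nonneg _
  set ε' : ℝ := ε / (|β - α| + 1) with hε'def
  have hε' : 0 < ε' := div_pos hε (by positivity)
  have hcpt : IsCompact ((uIcc α β) ×ˢ Icc t0 t1) := isCompact_uIcc.prod isCompact_Icc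
  have hUC := hcpt.uniformContinuousOn_of_continuous hPT.continuousOn
  rw [Metric.uniformContinuousOn_iff] at hUC
  obtain ⟨δ, hδ, hδ'⟩ := hUC ε' hε'
  have hball : ∀ᶠ s in nhdsWithin t (Icc t0 t1), dist s t < δ := by
    filter_upwards [mem_nhdsWithin_of_mem_nhds (Metric.ball_mem_nhds t hδ)] with s hs
    exact hs
  filter_upwards [hball, self_mem_nhdsWithin] with s hsd hsm
  have hsub : uIcc t s ⊆ Icc t0 t1 := uIcc_subset_Icc htm hsm
  -- pointwise bound
  have key : ∀ x ∈ uIcc α β, ‖P x s - P x t - (s - t) * PT x t‖ ≤ ε' * |s - t| := by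
    intro x hx
    have hftc : ∫ τ in t..s, PT x τ = P x s - P x t :=
      aux_ftc_icc (hd x) (fun u v => (hPTct x).intervalIntegrable u v) htm hsm
    have hconst : ∫ τ in t..s, PT x t = (s - t) * PT x t := by
      simp [intervalIntegral.integral_const, smul_eq_mul]
    rw [← hftc, ← hconst, ← intervalIntegral.integral_sub
      ((hPTct x).intervalIntegrable t s) intervalIntegrable_const]
    have hbd : ∀ τ ∈ uIoc t s, ‖PT x τ - PT x t‖ ≤ ε' := by
      intro τ hτ
      have hτ' : τ ∈ uIcc t s := uIoc_subset_uIcc hτ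
      have h1 : (x, τ) ∈ (uIcc α β) ×ˢ Icc t0 t1 := ⟨hx, hsub hτ'⟩
      have h2 : (x, t) ∈ (uIcc α β) ×ˢ Icc t0 t1 := ⟨hx, htm⟩
      have hττ : dist τ t ≤ dist s t := by
        rw [Real.dist_eq, Real.dist_eq]
        rcases le_total t s with h | h
        · rw [uIcc_of_le h] at hτ'
          rw [abs_of_nonneg (by linarith [hτ'.1]), abs_of_nonneg (by linarith)]
          linarith [hτ'.2]
        · rw [uIcc_of_ge h] at hτ'
          rw [abs_of_nonpos (by linarith [hτ'.2]), abs_of_nonpos (by linarith)]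
          linarith [hτ'.1]
      have hdist : dist (x, τ) (x, t) < δ := by
        rw [Prod.dist_eq]
        simp only [dist_self]
        have : max 0 (dist τ t) = dist τ t := max_eq_right dist_nonneg
        rw [this]
        exact lt_of_le_of_lt hττ hsd
      have := hδ' _ h1 _ h2 hdist
      rw [dist_eq_norm] at this
      exact this.le
    exact intervalIntegral.norm_integral_le_of_norm_le_const hbd
  -- combine
  have hcomb : (∫ x in α..β, P x s) - (∫ x in α..β, P x t)
      - (s - t) • (∫ x in α..β, PT x t)
      = ∫ x in α..β, (P x s - P x t - (s - t) * PT x t) := by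
    rw [← intervalIntegral.integral_smul, ← intervalIntegral.integral_sub
      ((hPcx s).intervalIntegrable α β) ((hPcx t).intervalIntegrable α β),
      ← intervalIntegral.integral_sub
        (show IntervalIntegrable (fun x => P x s - P x t) volume α β from
          ((hPcx s).sub (hPcx t)).intervalIntegrable α β)
        (show IntervalIntegrable (fun x => (s - t) • PT x t) volume α β from
          ((hPTcx t).const_smul (s - t)).intervalIntegrable α β)]
    simp [smul_eq_mul]
  rw [hcomb]
  have hbound : ∀ x ∈ uIoc α β, ‖P x s - P x t - (s - t) * PT x t‖ ≤ ε' * |s - t| :=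
    fun x hx => key x (uIoc_subset_uIcc hx)
  have h1 : ‖∫ x in α..β, (P x s - P x t - (s - t) * PT x t)‖ ≤ ε' * |s - t| * |β - α| :=
    intervalIntegral.norm_integral_le_of_norm_le_const hbound
  refine le_trans h1 ?_
  have heεB : ε' * (|β - α| + 1) = ε := div_mul_cancel₀ _ (by positivity)
  have h2 : ε' * |β - α| ≤ ε := by nlinarith [hε'.le]
  rw [Real.norm_eq_abs]
  calc ε' * |s - t| * |β - α| = (ε' * |β - α|) * |s - t| := by ring
    _ ≤ ε * |s - t| := mul_le_mul_of_nonneg_right h2 (abs_nonneg _)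

/-- Differentiation of a moving-boundary integral within `Icc t0 t1`. -/
lemma aux_bdry {t0 t1 : ℝ} {P PT : ℝ → ℝ → ℝ}
    (hP : Continuous fun z : ℝ × ℝ => P z.1 z.2)
    (hPT : Continuous fun z : ℝ × ℝ => PT z.1 z.2)
    (hd : ∀ x : ℝ, ∀ τ ∈ Icc t0 t1, HasDerivWithinAt (fun s => P x s) (PT x τ) (Icc t0 t1) τ)
    {r : ℝ → ℝ} (hr : ContinuousOn r (Icc t0 t1)) {r' t : ℝ}
    (hr' : HasDerivWithinAt r r' (Icc t0 t1) t) (htm : t ∈ Icc t0 t1) :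
    HasDerivWithinAt (fun s => ∫ x in (r t)..(r s), P x s) (P (r t) t * r') (Icc t0 t1) t := by
  have hPcx : ∀ u : ℝ, Continuous fun x => P x u := fun u =>
    hP.comp (continuous_id.prodMk continuous_const)
  obtain ⟨C, hC⟩ := (isCompact_Icc (a := t0) (b := t1)).exists_bound_of_continuousOn hr
  have hCK : ∀ τ ∈ Icc t0 t1, r τ ∈ Icc (-C) C := fun τ hτ => by
    have := hC τ hτ; rw [Real.norm_eq_abs] at this
    exact ⟨neg_le_of_abs_le this, le_of_abs_le this⟩
  obtain ⟨M, hM⟩ := ((isCompact_Icc (a := -C) (b := C)).prod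
    (isCompact_Icc (a := t0) (b := t1))).exists_bound_of_continuousOn hPT.continuousOn
  have hM0 : 0 ≤ M := le_trans (norm_nonneg _) (hM (r t, t) ⟨hCK t htm, htm⟩)
  have hLip : ∀ x ∈ Icc (-C) C, ∀ s ∈ Icc t0 t1, ‖P x s - P x t‖ ≤ M * ‖s - t‖ := by
    intro x hx s hs
    exact (convex_Icc t0 t1).norm_image_sub_le_of_norm_hasDerivWithin_le
      (fun τ hτ => hd x τ hτ) (fun τ hτ => hM (x, τ) ⟨hx, hτ⟩) htm hs
  have heq : (fun s => ∫ x in (r t)..(r s), P x s)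
      = fun s => (∫ x in (r t)..(r s), P x t) + ∫ x in (r t)..(r s), (P x s - P x t) := by
    funext s
    rw [← intervalIntegral.integral_add ((hPcx t).intervalIntegrable _ _)
      (show IntervalIntegrable (fun x => P x s - P x t) volume _ _ from
        ((hPcx s).sub (hPcx t)).intervalIntegrable _ _)]
    congr 1; funext x; ring
  rw [heq]
  have hF : HasDerivWithinAt (fun s => ∫ x in (r t)..(r s), P x t)
      (P (r t) t * r') (Icc t0 t1) t := by
    have h0 : HasDerivAt (fun u => ∫ x in (r t)..u, P x t) (P (r t) t) (r t) :=
      intervalIntegral.integral_hasDerivAt_right ((hPcx t).intervalIntegrable _ _)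
        ((hPcx t).stronglyMeasurableAtFilter _ _) (hPcx t).continuousAt
    exact h0.comp_hasDerivWithinAt t hr'
  have hR : HasDerivWithinAt (fun s => ∫ x in (r t)..(r s), (P x s - P x t))
      (0 : ℝ) (Icc t0 t1) t := by
    rw [hasDerivWithinAt_iff_isLittleO, Asymptotics.isLittleO_iff]
    intro ε hε
    have hM1 : (0:ℝ) < M + 1 := by linarith
    have hrc : ∀ᶠ s in nhdsWithin t (Icc t0 t1), dist (r s) (r t) < ε / (M + 1) := by
      have h := (hr'.continuousWithinAt).tendsto
      have := h (Metric.ball_mem_nhds (r t) (show (0:ℝ) < ε / (M+1) by positivity))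
      filter_upwards [this] with s hs using hs
    filter_upwards [hrc, self_mem_nhdsWithin] with s hsd hsm
    simp only [intervalIntegral.integral_same, sub_self, sub_zero, smul_zero]
    have hsubI : uIoc (r t) (r s) ⊆ Icc (-C) C :=
      Set.Subset.trans uIoc_subset_uIcc (uIcc_subset_Icc (hCK t htm) (hCK s hsm))
    have hb : ∀ x ∈ uIoc (r t) (r s), ‖P x s - P x t‖ ≤ M * ‖s - t‖ :=
      fun x hx => hLip x (hsubI hx) s hsm
    have h1 : ‖∫ x in (r t)..(r s), (P x s - P x t)‖ ≤ M * ‖s - t‖ * |r s - r t| :=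
      intervalIntegral.norm_integral_le_of_norm_le_const hb
    refine le_trans h1 ?_
    rw [Real.dist_eq] at hsd
    have h2 : |r s - r t| * (M + 1) < ε := (lt_div_iff₀ hM1).1 hsd
    have h3 : M * |r s - r t| ≤ ε := by nlinarith [abs_nonneg (r s - r t)]
    rw [Real.norm_eq_abs]
    calc M * |s - t| * |r s - r t| = (M * |r s - r t|) * |s - t| := by ring
      _ ≤ ε * |s - t| := mul_le_mul_of_nonneg_right h3 (abs_nonneg _)
  have := hF.add hR
  rwa [add_zero] at this

/-- When the space-time boundaries of the control volume are characteristic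
curves, i.e. solutions of `dr/dt = a(r,t)`, the residual advection term
vanishes and the change of mass in the Lagrangian control volume is given
solely by the head and foot integrals. -/
theorem characteristic_control_volume_conservation
    (t0 t1 : ℝ) (ht : t0 < t1)
    (a : ℝ → ℝ → ℝ)
    (ha : ContinuousOn (fun q : ℝ × ℝ => a q.1 q.2) ((univ : Set ℝ) ×ˢ Icc t0 t1))
    (p pt px : ℝ → ℝ → ℝ)
    (hpcont : ContinuousOn (fun q : ℝ × ℝ => p q.1 q.2) ((univ : Set ℝ) ×ˢ Icc t0 t1))
    (hpt : ∀ x : ℝ, ∀ t ∈ Icc t0 t1,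
      HasDerivWithinAt (fun s => p x s) (pt x t) (Icc t0 t1) t)
    (hptcont : ContinuousOn (fun q : ℝ × ℝ => pt q.1 q.2) ((univ : Set ℝ) ×ˢ Icc t0 t1))
    (hpx : ∀ t ∈ Icc t0 t1, ∀ x : ℝ, HasDerivAt (fun y => p y t) (px x t) x)
    (hpxcont : ContinuousOn (fun q : ℝ × ℝ => px q.1 q.2) ((univ : Set ℝ) ×ˢ Icc t0 t1))
    (q : ℝ → ℝ → ℝ)
    (hq : ∀ t ∈ Icc t0 t1, ∀ x : ℝ, HasDerivAt (fun y => a y t * p y t) (q x t) x)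
    (hqcont : ContinuousOn (fun z : ℝ × ℝ => q z.1 z.2) ((univ : Set ℝ) ×ˢ Icc t0 t1))
    (rm rp : ℝ → ℝ)
    (hrm : ∀ t ∈ Icc t0 t1, HasDerivWithinAt rm (a (rm t) t) (Icc t0 t1) t)
    (hrp : ∀ t ∈ Icc t0 t1, HasDerivWithinAt rp (a (rp t) t) (Icc t0 t1) t)
    (hle : ∀ t ∈ Icc t0 t1, rm t ≤ rp t) :
    ∫ t in t0..t1, (∫ x in (rm t)..(rp t), pt x t + q x t)
      = (∫ x in (rm t1)..(rp t1), p x t1) - ∫ x in (rm t0)..(rp t0), p x t0 := by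
  -- clamp function
  set c : ℝ → ℝ := fun s => max t0 (min s t1) with hcdef
  have hcmem : ∀ s, c s ∈ Icc t0 t1 := fun s =>
    ⟨le_max_left _ _, max_le ht.le (min_le_right _ _)⟩
  have hceq : ∀ s ∈ Icc t0 t1, c s = s := fun s hs => by
    simp only [hcdef]
    rw [min_eq_left hs.2, max_eq_right hs.1]
  have hcc : Continuous c := continuous_const.max (continuous_id.min continuous_const)
  set P : ℝ → ℝ → ℝ := fun x s => p x (c s) with hPdef
  set PT : ℝ → ℝ → ℝ := fun x s => pt x (c s) with hPTdef
  have hPc : Continuous fun z : ℝ × ℝ => P z.1 z.2 :=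
    hpcont.comp_continuous (continuous_fst.prodMk (hcc.comp continuous_snd))
      (fun z => ⟨mem_univ _, hcmem _⟩)
  have hPTc : Continuous fun z : ℝ × ℝ => PT z.1 z.2 :=
    hptcont.comp_continuous (continuous_fst.prodMk (hcc.comp continuous_snd))
      (fun z => ⟨mem_univ _, hcmem _⟩)
  have hPd : ∀ x : ℝ, ∀ τ ∈ Icc t0 t1,
      HasDerivWithinAt (fun s => P x s) (PT x τ) (Icc t0 t1) τ := by
    intro x τ hτ
    have h1 : PT x τ = pt x τ := by simp only [hPTdef]; rw [hceq τ hτ]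
    rw [h1]
    exact (hpt x τ hτ).congr
      (fun s hs => by simp only [hPdef]; rw [hceq s hs])
      (by simp only [hPdef]; rw [hceq τ hτ])
  have hrmc : ContinuousOn rm (Icc t0 t1) := fun τ hτ => (hrm τ hτ).continuousWithinAt
  have hrpc : ContinuousOn rp (Icc t0 t1) := fun τ hτ => (hrp τ hτ).continuousWithinAt
  have hptx : ∀ τ ∈ Icc t0 t1, Continuous fun x => pt x τ := fun τ hτ =>
    hptcont.comp_continuous (continuous_id.prodMk continuous_const)
      (fun x => ⟨mem_univ _, hτ⟩)
  have hqx : ∀ τ ∈ Icc t0 t1, Continuous fun x => q x τ := fun τ hτ =>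
    hqcont.comp_continuous (continuous_id.prodMk continuous_const)
      (fun x => ⟨mem_univ _, hτ⟩)
  set G : ℝ → ℝ := fun τ => ∫ x in rm τ..rp τ, p x τ with hGdef
  set D : ℝ → ℝ := fun τ => (∫ x in rm τ..rp τ, pt x τ)
      + (a (rp τ) τ * p (rp τ) τ - a (rm τ) τ * p (rm τ) τ) with hDdef
  -- Step A : the inner integrand equals D on Icc
  have stepA : ∀ τ ∈ Icc t0 t1,
      (∫ x in rm τ..rp τ, (pt x τ + q x τ)) = D τ := by
    intro τ hτ
    rw [intervalIntegral.integral_add ((hptx τ hτ).intervalIntegrable _ _)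
      ((hqx τ hτ).intervalIntegrable _ _)]
    have hqint : (∫ x in rm τ..rp τ, q x τ)
        = a (rp τ) τ * p (rp τ) τ - a (rm τ) τ * p (rm τ) τ :=
      intervalIntegral.integral_eq_sub_of_hasDerivAt
        (fun x _ => hq τ hτ x) ((hqx τ hτ).intervalIntegrable _ _)
    rw [hqint]
  -- Step B : G has derivative D within Icc
  have stepB : ∀ t ∈ Icc t0 t1, HasDerivWithinAt G (D t) (Icc t0 t1) t := by
    intro t htm
    have h1 := aux_param hPc hPTc hPd (rm t) (rp t) htm
    have h2 := aux_bdry hPc hPTc hPd hrpc (hrp t htm) htm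
    have h3 := aux_bdry hPc hPTc hPd hrmc (hrm t htm) htm
    have hsum := h1.add (h2.sub h3)
    have hfun : ∀ s ∈ Icc t0 t1, G s =
        (∫ x in rm t..rp t, P x s)
          + ((∫ x in rp t..rp s, P x s) - (∫ x in rm t..rm s, P x s)) := by
      intro s hs
      have hPs : ∀ u v : ℝ, IntervalIntegrable (fun x => P x s) volume u v :=
        fun u v => (hPc.comp (continuous_id.prodMk continuous_const)).intervalIntegrable u v
      have e1 : (∫ x in rm t..rp t, P x s) + (∫ x in rp t..rp s, P x s)
          = ∫ x in rm t..rp s, P x s :=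
        intervalIntegral.integral_add_adjacent_intervals (hPs _ _) (hPs _ _)
      have e2 : (∫ x in rm t..rm s, P x s) + (∫ x in rm s..rp s, P x s)
          = ∫ x in rm t..rp s, P x s :=
        intervalIntegral.integral_add_adjacent_intervals (hPs _ _) (hPs _ _)
      have e3 : (∫ x in rm s..rp s, P x s) = G s := by
        simp only [hGdef]
        exact intervalIntegral.integral_congr
          (fun x hx => by simp only [hPdef]; rw [hceq s hs])
      linarith
    have hD : D t = (∫ x in rm t..rp t, PT x t)
        + (P (rp t) t * a (rp t) t - P (rm t) t * a (rm t) t) := by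
      simp only [hDdef]
      have e4 : (∫ x in rm t..rp t, PT x t) = ∫ x in rm t..rp t, pt x t :=
        intervalIntegral.integral_congr
          (fun x hx => by simp only [hPTdef]; rw [hceq t htm])
      have e5 : P (rp t) t = p (rp t) t := by simp only [hPdef]; rw [hceq t htm]
      have e6 : P (rm t) t = p (rm t) t := by simp only [hPdef]; rw [hceq t htm]
      rw [e4, e5, e6]; ring
    rw [hD]
    exact hsum.congr (fun s hs => hfun s hs) (hfun t htm)
  -- Step C : continuity of D on Icc
  have hPTswap : Continuous fun z : ℝ × ℝ => PT z.2 z.1 :=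
    hPTc.comp (continuous_snd.prodMk continuous_fst)
  have hPsi : Continuous fun z : ℝ × ℝ => ∫ x in (0:ℝ)..z.2, PT x z.1 :=
    intervalIntegral.continuous_parametric_primitive_of_continuous (μ := volume)
      (f := fun τ x => PT x τ) (a₀ := 0) (by exact hPTswap)
  have hterm1 : ContinuousOn (fun τ => ∫ x in rm τ..rp τ, pt x τ) (Icc t0 t1) := by
    have hc0p : ContinuousOn (fun τ : ℝ => ((τ, rp τ) : ℝ × ℝ)) (Icc t0 t1) :=
      (continuous_id.continuousOn).prodMk hrpc
    have hc0m : ContinuousOn (fun τ : ℝ => ((τ, rm τ) : ℝ × ℝ)) (Icc t0 t1) :=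
      (continuous_id.continuousOn).prodMk hrmc
    have hc1p : ContinuousOn (fun τ => ∫ x in (0:ℝ)..rp τ, PT x τ) (Icc t0 t1) := by
      have h := hPsi.comp_continuousOn hc0p
      exact h
    have hc1m : ContinuousOn (fun τ => ∫ x in (0:ℝ)..rm τ, PT x τ) (Icc t0 t1) := by
      have h := hPsi.comp_continuousOn hc0m
      exact h
    have hcomp : ContinuousOn (fun τ => (∫ x in (0:ℝ)..rp τ, PT x τ)
        - ∫ x in (0:ℝ)..rm τ, PT x τ) (Icc t0 t1) := hc1p.sub hc1m
    apply hcomp.congr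
    intro τ hτ
    have hPTint : ∀ u v : ℝ, IntervalIntegrable (fun x => PT x τ) volume u v :=
      fun u v => (hPTc.comp (continuous_id.prodMk continuous_const)).intervalIntegrable u v
    have e1 : (∫ x in (0:ℝ)..rm τ, PT x τ) + (∫ x in rm τ..rp τ, PT x τ)
        = ∫ x in (0:ℝ)..rp τ, PT x τ :=
      intervalIntegral.integral_add_adjacent_intervals (hPTint _ _) (hPTint _ _)
    have e2 : (∫ x in rm τ..rp τ, PT x τ) = ∫ x in rm τ..rp τ, pt x τ :=
      intervalIntegral.integral_congr
        (fun x hx => by simp only [hPTdef]; rw [hceq τ hτ])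
    simp only
    linarith
  have hbdrycont : ∀ (r : ℝ → ℝ), ContinuousOn r (Icc t0 t1) →
      ContinuousOn (fun τ => a (r τ) τ * p (r τ) τ) (Icc t0 t1) := by
    intro r hr
    have h1 : ContinuousOn (fun τ => ((r τ, τ) : ℝ × ℝ)) (Icc t0 t1) :=
      hr.prodMk continuousOn_id
    have hmaps : MapsTo (fun τ => ((r τ, τ) : ℝ × ℝ)) (Icc t0 t1)
        ((univ : Set ℝ) ×ˢ Icc t0 t1) := fun τ hτ => ⟨mem_univ _, hτ⟩
    exact (ha.comp h1 hmaps).mul (hpcont.comp h1 hmaps)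
  have hDcont : ContinuousOn D (Icc t0 t1) := by
    simp only [hDdef]
    exact hterm1.add ((hbdrycont rp hrpc).sub (hbdrycont rm hrmc))
  have hDint : IntervalIntegrable D volume t0 t1 := by
    apply ContinuousOn.intervalIntegrable
    rwa [uIcc_of_le ht.le]
  have hGcont : ContinuousOn G (uIcc t0 t1) := by
    rw [uIcc_of_le ht.le]
    exact fun τ hτ => (stepB τ hτ).continuousWithinAt
  have hGderiv : ∀ τ ∈ Ioo (min t0 t1) (max t0 t1), HasDerivWithinAt G (D τ) (Ioi τ) τ := by
    rw [min_eq_left ht.le, max_eq_right ht.le]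
    intro τ hτ
    exact (stepB τ ⟨hτ.1.le, hτ.2.le⟩).mono_of_mem_nhdsWithin
      (Icc_mem_nhdsGT_of_mem ⟨hτ.1.le, hτ.2⟩)
  have hmain : ∫ τ in t0..t1, D τ = G t1 - G t0 :=
    intervalIntegral.integral_eq_sub_of_hasDeriv_right hGcont hGderiv hDint
  calc ∫ t in t0..t1, (∫ x in (rm t)..(rp t), pt x t + q x t)
      = ∫ τ in t0..t1, D τ := by
        apply intervalIntegral.integral_congr
        intro τ hτ
        rw [uIcc_of_le ht.le] at hτ
        exact stepA τ hτ
    _ = G t1 - G t0 := hmain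
    _ = _ := by simp only [hGdef]
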